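/- arXiv:0810.3440 — 9 statements merged into one kernel-verified Lean document; each statement's English description precedes it below -/
import Mathlib

section
/- For 1 ≤ a ≤ b, the minimum distance of the code C₀(a,b) is a, i.e., every nonzero element of C₀(a,b) has Hamming weight at least a, and some element has weight exactly a. -/
/-- The elementary row matrix `r_i`: 1's exactly in row `i`. -/
def rowMat (a b : ℕ) (i : Fin a) : Matrix (Fin a) (Fin b) (ZMod 2) :=
  fun i' _ => if i' = i then 1 else 0

/-- The elementary column matrix `c_j`: 1's exactly in column `j`. -/
def colMat (a b : ℕ) (j : Fin b) : Matrix (Fin a) (Fin b) (ZMod 2) :=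
  fun _ j' => if j' = j then 1 else 0

/-- The code `C₀(a,b)`, spanned by the elementary row and column matrices. -/
def C0 (a b : ℕ) : Submodule (ZMod 2) (Matrix (Fin a) (Fin b) (ZMod 2)) :=
  Submodule.span (ZMod 2) (Set.range (rowMat a b) ∪ Set.range (colMat a b))

/-- The Hamming weight of a matrix: the number of nonzero entries. -/
def wt {a b : ℕ} (M : Matrix (Fin a) (Fin b) (ZMod 2)) : ℕ :=
  (Finset.univ.filter fun p : Fin a × Fin b => M p.1 p.2 ≠ 0).card

lemma zmod2_add_eq_zero (u v : ZMod 2) : u + v = 0 ↔ u = v := by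
  revert u v; decide

lemma mem_C0_repr {a b : ℕ} {M : Matrix (Fin a) (Fin b) (ZMod 2)} (h : M ∈ C0 a b) :
    ∃ x : Fin a → ZMod 2, ∃ y : Fin b → ZMod 2, ∀ i j, M i j = x i + y j := by
  induction h using Submodule.span_induction with
  | mem v hv =>
    rcases hv with ⟨i, rfl⟩ | ⟨j, rfl⟩
    · exact ⟨fun i' => if i' = i then 1 else 0, 0, fun i' j' => by simp [rowMat]⟩
    · exact ⟨0, fun j' => if j' = j then 1 else 0, fun i' j' => by simp [colMat]⟩
  | zero => exact ⟨0, 0, fun i j => by simp⟩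
  | add u v _ _ hu hv =>
    obtain ⟨x, y, hx⟩ := hu
    obtain ⟨x', y', hx'⟩ := hv
    exact ⟨x + x', y + y', fun i j => by
      simp only [Matrix.add_apply, hx, hx', Pi.add_apply]; ring⟩
  | smul c v _ hv =>
    obtain ⟨x, y, hx⟩ := hv
    exact ⟨c • x, c • y, fun i j => by
      simp only [Matrix.smul_apply, hx, Pi.smul_apply, smul_eq_mul]; ring⟩

theorem minDistance_C0 (a b : ℕ) (ha : 1 ≤ a) (hab : a ≤ b) :
    (∀ v ∈ C0 a b, v ≠ 0 → a ≤ wt v) ∧ (∃ v ∈ C0 a b, v ≠ 0 ∧ wt v = a) := by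
  constructor
  · intro v hv hv0
    obtain ⟨x, y, hxy⟩ := mem_C0_repr hv
    -- get a nonzero entry
    have hne : ∃ i j, v i j ≠ 0 := by
      by_contra hc
      push_neg at hc
      exact hv0 (by funext i j; exact hc i j)
    obtain ⟨i0, j0, hij0⟩ := hne
    by_cases hy : ∃ j1 j2 : Fin b, y j1 ≠ y j2
    · -- y is not constant: each row contains a nonzero entry
      obtain ⟨j1, j2, hj12⟩ := hy
      have : a ≤ wt v := by
        have := Finset.card_le_card_of_injOn
          (f := fun i : Fin a => (i, if y j1 = x i then j2 else j1))
          (s := (Finset.univ : Finset (Fin a)))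
          (t := Finset.univ.filter fun p : Fin a × Fin b => v p.1 p.2 ≠ 0)
          (by
            intro i _
            simp only [Finset.mem_coe, Finset.mem_filter, Finset.mem_univ, true_and]
            by_cases h : y j1 = x i
            · rw [if_pos h, hxy]
              intro hz
              rw [zmod2_add_eq_zero] at hz
              exact hj12 (h.trans hz)
            · rw [if_neg h, hxy]
              intro hz
              rw [zmod2_add_eq_zero] at hz
              exact h hz.symm)
          (by intro i _ i' _ h; exact (Prod.mk.injEq _ _ _ _ ▸ h).1)
        simpa [wt] using this
      exact this
    · -- y is constant; then row i0 is all nonzero, giving weight ≥ b ≥ a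
      push_neg at hy
      have hrow : ∀ j, v i0 j ≠ 0 := by
        intro j
        rw [hxy]
        intro hz
        rw [zmod2_add_eq_zero] at hz
        apply hij0
        rw [hxy, zmod2_add_eq_zero, hz, hy j j0]
      have hb : b ≤ wt v := by
        have := Finset.card_le_card_of_injOn
          (f := fun j : Fin b => ((i0, j) : Fin a × Fin b))
          (s := (Finset.univ : Finset (Fin b)))
          (t := Finset.univ.filter fun p : Fin a × Fin b => v p.1 p.2 ≠ 0)
          (by intro j _; simp only [Finset.mem_coe, Finset.mem_filter, Finset.mem_univ, true_and]; exact hrow j)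
          (by intro j _ j' _ h; exact (Prod.mk.injEq _ _ _ _ ▸ h).2)
        simpa [wt] using this
      exact hab.trans hb
  · -- the column matrix c_0 has weight exactly a
    have hb : 0 < b := lt_of_lt_of_le ha hab
    refine ⟨colMat a b ⟨0, hb⟩, ?_, ?_, ?_⟩
    · exact Submodule.subset_span (Or.inr ⟨⟨0, hb⟩, rfl⟩)
    · intro h
      have : colMat a b ⟨0, hb⟩ ⟨0, ha⟩ ⟨0, hb⟩ = 0 := by rw [h]; rfl
      simp [colMat] at this
    · have : (Finset.univ.filter fun p : Fin a × Fin b =>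
          colMat a b ⟨0, hb⟩ p.1 p.2 ≠ 0)
          = Finset.univ ×ˢ {⟨0, hb⟩} := by
        ext p
        simp only [Finset.mem_filter, Finset.mem_univ, true_and, Finset.mem_product,
          Finset.mem_singleton]
        simp only [colMat]
        constructor
        · intro h
          exact by_contra fun hc => h (if_neg hc)
        · intro h
          rw [if_pos h]
          exact one_ne_zero
      rw [wt, this]
      simp
end

section
/- If 2 = a < b, then C₀(2,b) equals the set of 2×b matrices over F₂ in which all column sums (c_{1j} + c_{2j}) are equal. -/
theorem C0_two_lt (b : ℕ) (hb : 2 < b) :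
    ∀ M : Matrix (Fin 2) (Fin b) (ZMod 2),
      M ∈ C0 2 b ↔ ∀ j k : Fin b, M 0 j + M 1 j = M 0 k + M 1 k := by
  intro M
  have : NeZero b := ⟨by omega⟩
  constructor
  · intro hM
    let S : Submodule (ZMod 2) (Matrix (Fin 2) (Fin b) (ZMod 2)) :=
      { carrier := {M | ∀ j k : Fin b, M 0 j + M 1 j = M 0 k + M 1 k}
        add_mem' := by
          intro x y hx hy j k
          simp only [Matrix.add_apply]
          have := hx j k; have := hy j k
          linear_combination hx j k + hy j k
        zero_mem' := by intro j k; simp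
        smul_mem' := by
          intro c x hx j k
          simp only [Matrix.smul_apply, smul_eq_mul]
          linear_combination c * hx j k }
    have hle : C0 2 b ≤ S := by
      apply Submodule.span_le.mpr
      rintro x hx
      rcases hx with ⟨i, rfl⟩ | ⟨j0, rfl⟩
      · intro j' k'
        simp [rowMat]
      · intro j' k'
        simp only [colMat]
        rw [CharTwo.add_self_eq_zero, CharTwo.add_self_eq_zero]
    exact hle hM
  · intro h
    have key : M = (M 0 0 + M 1 0) • rowMat 2 b 1 + ∑ j, M 0 j • colMat 2 b j := by
      ext i j'
      simp only [Matrix.add_apply, Matrix.smul_apply, Matrix.sum_apply, smul_eq_mul,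
        rowMat, colMat, mul_ite, mul_one, mul_zero]
      rw [Finset.sum_ite_eq Finset.univ j' (M 0 ·)]
      fin_cases i
      · simp
      · show M 1 j' = (if (1 : Fin 2) = 1 then M 0 0 + M 1 0 else 0) +
          if j' ∈ Finset.univ then M 0 j' else 0
        rw [if_pos rfl, if_pos (Finset.mem_univ j'), h 0 j']
        show M 1 j' = M 0 j' + M 1 j' + M 0 j'
        have h2 : (2 : ZMod 2) = 0 := rfl
        linear_combination -(M 0 j') * h2
    rw [key]
    refine Submodule.add_mem _ (Submodule.smul_mem _ _ (Submodule.subset_span ?_))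
      (Submodule.sum_mem _ fun j _ => Submodule.smul_mem _ _ (Submodule.subset_span ?_))
    · exact Or.inl ⟨1, rfl⟩
    · exact Or.inr ⟨j, rfl⟩
end

section
/- If 2 < a < b, then the set of codewords of C₀(a,b) of Hamming weight exactly a is precisely the set {c_1, …, c_b} of elementary column matrices. -/
open Finset

lemma mem_C0_iff {a b : ℕ} (v : Matrix (Fin a) (Fin b) (ZMod 2)) :
    v ∈ C0 a b ↔ ∃ f : Fin a → ZMod 2, ∃ g : Fin b → ZMod 2,
      ∀ i j, v i j = f i + g j := by
  constructor
  · intro hv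
    induction hv using Submodule.span_induction with
    | mem x hx =>
      rcases hx with ⟨i, rfl⟩ | ⟨j, rfl⟩
      · exact ⟨fun i' => if i' = i then 1 else 0, 0, fun i' j => by simp [rowMat]⟩
      · exact ⟨0, fun j' => if j' = j then 1 else 0, fun i j' => by simp [colMat]⟩
    | zero => exact ⟨0, 0, fun i j => by simp [Matrix.zero_apply]⟩
    | add x y _ _ hx hy =>
      obtain ⟨f, g, h1⟩ := hx; obtain ⟨f', g', h2⟩ := hy
      exact ⟨f + f', g + g', fun i j => by
        simp only [Matrix.add_apply, h1, h2, Pi.add_apply]; ring⟩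
    | smul c x _ hx =>
      obtain ⟨f, g, h⟩ := hx
      exact ⟨c • f, c • g, fun i j => by
        simp only [Matrix.smul_apply, h, Pi.smul_apply, smul_eq_mul]; ring⟩
  · rintro ⟨f, g, h⟩
    have hv : v = ∑ i, f i • rowMat a b i + ∑ j, g j • colMat a b j := by
      ext i j
      simp [Matrix.add_apply, Matrix.sum_apply, rowMat, colMat, h,
        Finset.sum_ite_eq', mul_ite]
    rw [hv]
    apply Submodule.add_mem
    · exact Submodule.sum_mem _ fun i _ =>
        Submodule.smul_mem _ _ (Submodule.subset_span (Or.inl ⟨i, rfl⟩))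
    · exact Submodule.sum_mem _ fun j _ =>
        Submodule.smul_mem _ _ (Submodule.subset_span (Or.inr ⟨j, rfl⟩))

lemma zmod2_cases : ∀ x : ZMod 2, x = 0 ∨ x = 1 := by decide

lemma zmod2_add_ne : ∀ x y : ZMod 2,
    x + y ≠ 0 ↔ ((x = 1 ∧ ¬ y = 1) ∨ (¬ x = 1 ∧ y = 1)) := by decide

lemma wt_eq {a b : ℕ} (f : Fin a → ZMod 2) (g : Fin b → ZMod 2)
    (v : Matrix (Fin a) (Fin b) (ZMod 2)) (h : ∀ i j, v i j = f i + g j) :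
    wt v = (univ.filter (f · = 1)).card * (b - (univ.filter (g · = 1)).card)
         + (a - (univ.filter (f · = 1)).card) * (univ.filter (g · = 1)).card := by
  set S := univ.filter (f · = 1) with hS
  set T := univ.filter (g · = 1) with hT
  have key : (Finset.univ.filter fun p : Fin a × Fin b => v p.1 p.2 ≠ 0)
      = S ×ˢ Tᶜ ∪ Sᶜ ×ˢ T := by
    ext ⟨i, j⟩
    simp only [mem_filter, mem_univ, true_and, mem_union, mem_product, mem_compl,
      hS, hT, h, zmod2_add_ne]
  have hdisj : Disjoint (S ×ˢ Tᶜ) (Sᶜ ×ˢ T) := by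
    rw [Finset.disjoint_left]
    rintro ⟨i, j⟩ h1 h2
    simp only [mem_product, mem_compl] at h1 h2
    exact h2.1 h1.1
  have hSc : Sᶜ.card = a - S.card := by rw [Finset.card_compl]; simp
  have hTc : Tᶜ.card = b - T.card := by rw [Finset.card_compl]; simp
  rw [wt, key, Finset.card_union_of_disjoint hdisj, Finset.card_product,
    Finset.card_product, hSc, hTc]

lemma arith {a b s t : ℕ} (ha : 2 < a) (hab : a < b) (hs : s ≤ a) (ht : t ≤ b)
    (h : s * (b - t) + (a - s) * t = a) :
    (s = 0 ∧ t = 1) ∨ (s = a ∧ t = b - 1) := by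
  rcases Nat.eq_zero_or_pos s with rfl | hs1
  · left
    simp only [Nat.zero_mul, Nat.sub_zero, Nat.zero_add] at h
    refine ⟨rfl, ?_⟩
    rcases Nat.lt_or_ge t 1 with h1 | h1
    · have h0 : t = 0 := by omega
      rw [h0, Nat.mul_zero] at h; omega
    rcases Nat.lt_or_ge t 2 with h2 | h2
    · omega
    · nlinarith
  rcases Nat.eq_or_lt_of_le hs with rfl | hs2
  · right
    simp only [Nat.sub_self, Nat.zero_mul, Nat.add_zero] at h
    have hbt : b - t = 1 := by
      rcases Nat.lt_or_ge (b - t) 1 with h1 | h1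
      · have h0 : b - t = 0 := by omega
        rw [h0, Nat.mul_zero] at h; omega
      rcases Nat.lt_or_ge (b - t) 2 with h2 | h2
      · omega
      · nlinarith
    omega
  · exfalso
    have h1 : b - t ≤ s * (b - t) := Nat.le_mul_of_pos_left _ (by omega)
    have h2 : t ≤ (a - s) * t := Nat.le_mul_of_pos_left _ (by omega)
    generalize hx : s * (b - t) = x at h h1
    generalize hy : (a - s) * t = y at h h2
    omega

lemma wt_colMat {a b : ℕ} (j : Fin b) : wt (colMat a b j) = a := by
  have key : (Finset.univ.filter fun p : Fin a × Fin b => colMat a b j p.1 p.2 ≠ 0)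
      = Finset.univ ×ˢ {j} := by
    ext ⟨i, j'⟩
    simp only [mem_filter, mem_univ, true_and, mem_product, mem_singleton, colMat]
    constructor
    · intro h
      by_contra hne
      simp [hne] at h
    · intro h; subst h; simp
  rw [wt, key, Finset.card_product]
  simp

theorem minWeight_words_C0 (a b : ℕ) (ha : 2 < a) (hab : a < b) :
    ∀ v : Matrix (Fin a) (Fin b) (ZMod 2),
      (v ∈ C0 a b ∧ wt v = a) ↔ v ∈ Set.range (colMat a b) := by
  intro v
  constructor
  · rintro ⟨hv, hw⟩
    obtain ⟨f, g, h⟩ := (mem_C0_iff v).1 hv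
    rw [wt_eq f g v h] at hw
    set S := univ.filter (f · = 1) with hS
    set T := univ.filter (g · = 1) with hT
    have hs : S.card ≤ a := by
      have := Finset.card_le_card (Finset.filter_subset (f · = 1) univ)
      simpa using this
    have ht : T.card ≤ b := by
      have := Finset.card_le_card (Finset.filter_subset (g · = 1) univ)
      simpa using this
    rcases arith ha hab hs ht hw with ⟨hs0, ht1⟩ | ⟨hsa, htb⟩
    · -- f ≡ 0, g is an indicator of a single column
      obtain ⟨j0, hj0⟩ := Finset.card_eq_one.1 ht1
      refine ⟨j0, ?_⟩
      have hf : ∀ i, f i = 0 := by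
        intro i
        rcases zmod2_cases (f i) with h0 | h1
        · exact h0
        · exfalso
          have : i ∈ S := by simp [hS, h1]
          rw [Finset.card_eq_zero.1 hs0] at this
          exact absurd this (Finset.notMem_empty i)
      have hg : ∀ j, g j = 1 ↔ j = j0 := by
        intro j
        constructor
        · intro hgj
          have : j ∈ T := by simp [hT, hgj]
          rw [hj0] at this; simpa using this
        · intro hj
          rw [hj]
          have : j0 ∈ T := by rw [hj0]; simp
          simp only [hT, mem_filter] at this
          exact this.2
      ext i j
      rw [colMat, h i j, hf i, zero_add]
      rcases zmod2_cases (g j) with h0 | h1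
      · have : ¬ j = j0 := fun hj => by rw [(hg j).2 hj] at h0; exact one_ne_zero h0
        simp [this, h0]
      · have hjj := (hg j).1 h1
        subst hjj
        simp [h1]
    · -- f ≡ 1, g is 1 except at a single column j0
      have hSu : S = univ := Finset.eq_univ_of_card S (by simpa using hsa)
      have hTc : Tᶜ.card = 1 := by
        rw [Finset.card_compl, Fintype.card_fin, htb]
        omega
      obtain ⟨j0, hj0⟩ := Finset.card_eq_one.1 hTc
      refine ⟨j0, ?_⟩
      have hf : ∀ i, f i = 1 := by
        intro i
        have : i ∈ S := hSu ▸ Finset.mem_univ i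
        simp only [hS, mem_filter] at this
        exact this.2
      have hg : ∀ j, g j = 1 ↔ ¬ j = j0 := by
        intro j
        constructor
        · intro hgj hj
          subst hj
          have : j ∈ Tᶜ → False := by
            intro hmem
            simp only [hT, mem_compl, mem_filter, mem_univ, true_and] at hmem
            exact hmem hgj
          have : j ∈ Tᶜ := by rw [hj0]; simp
          simp only [hT, mem_compl, mem_filter, mem_univ, true_and] at this
          exact this hgj
        · intro hj
          by_contra hgj
          have : j ∈ Tᶜ := by
            simp only [hT, mem_compl, mem_filter, mem_univ, true_and]
            exact hgj
          rw [hj0] at this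
          simp only [mem_singleton] at this
          exact hj this
      ext i j
      rw [colMat, h i j, hf i]
      by_cases hj : j = j0
      · have hgj : g j = 0 := by
          rcases zmod2_cases (g j) with h0 | h1
          · exact h0
          · exact absurd hj ((hg j).1 h1)
        subst hj
        simp [hgj]
      · have hgj : g j = 1 := (hg j).2 hj
        simp [hj, hgj]
        decide
  · rintro ⟨j, rfl⟩
    exact ⟨Submodule.subset_span (Or.inr ⟨j, rfl⟩), wt_colMat j⟩
end

section
/- If (σ,τ) ∈ Sym(a) × Sym(b) generates a subgroup acting regularly on {1,…,a}×{1,…,b} (with 2 < a < b), then σ is an a-cycle, τ is a b-cycle, and gcd(a,b) = 1. -/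
private def pch (α β : Type*) : Equiv.Perm α × Equiv.Perm β →* Equiv.Perm (α × β) :=
  MonoidHom.mk' (fun p => Equiv.prodCongr p.1 p.2) (fun _ _ => Equiv.ext fun _ => rfl)

private lemma pch_zpow {α β : Type*} (σ : Equiv.Perm α) (τ : Equiv.Perm β) (k : ℤ) :
    (Equiv.prodCongr σ τ) ^ k = Equiv.prodCongr (σ ^ k) (τ ^ k) := by
  have h : (Equiv.prodCongr σ τ) = pch α β (σ, τ) := rfl
  rw [h, ← map_zpow]
  rfl

private lemma trans_cycle {n : ℕ} (hn : 1 < n) (σ : Equiv.Perm (Fin n))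
    (h : ∀ x y : Fin n, ∃ k : ℤ, (σ ^ k) x = y) :
    σ.IsCycle ∧ σ.support = Finset.univ := by
  haveI : NeZero n := ⟨by omega⟩
  haveI : Nontrivial (Fin n) := Fin.nontrivial_iff_two_le.2 hn
  have hfix : ∀ x : Fin n, σ x ≠ x := by
    intro x hx
    obtain ⟨y, hy⟩ := exists_ne x
    obtain ⟨k, hk⟩ := h x y
    exact hy (hk ▸ (Function.IsFixedPt.perm_zpow hx k).symm ▸ rfl)
  refine ⟨⟨0, hfix 0, fun y _ => h 0 y⟩, ?_⟩
  ext x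
  simp [Equiv.Perm.mem_support, hfix x]

theorem regular_cyclic_necessary (a b : ℕ) (ha : 2 < a) (hab : a < b)
    (σ : Equiv.Perm (Fin a)) (τ : Equiv.Perm (Fin b))
    (htrans : ∀ p q : Fin a × Fin b, ∃ k : ℤ, ((Equiv.prodCongr σ τ) ^ k) p = q)
    (hfree : ∀ k : ℤ, ∀ p : Fin a × Fin b,
      ((Equiv.prodCongr σ τ) ^ k) p = p → (Equiv.prodCongr σ τ) ^ k = 1) :
    (σ.IsCycle ∧ σ.support = Finset.univ) ∧
    (τ.IsCycle ∧ τ.support = Finset.univ) ∧ Nat.gcd a b = 1 := by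
  haveI : NeZero a := ⟨by omega⟩
  haveI : NeZero b := ⟨by omega⟩
  have hσ : σ.IsCycle ∧ σ.support = Finset.univ := by
    refine trans_cycle (by omega) σ (fun x y => ?_)
    obtain ⟨k, hk⟩ := htrans (x, 0) (y, 0)
    rw [pch_zpow] at hk
    exact ⟨k, congrArg Prod.fst hk⟩
  have hτ : τ.IsCycle ∧ τ.support = Finset.univ := by
    refine trans_cycle (by omega) τ (fun x y => ?_)
    obtain ⟨k, hk⟩ := htrans (0, x) (0, y)
    rw [pch_zpow] at hk
    exact ⟨k, congrArg Prod.snd hk⟩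
  refine ⟨hσ, hτ, ?_⟩
  -- orders
  have hordσ : orderOf σ = a := by
    rw [hσ.1.orderOf, hσ.2, Finset.card_univ, Fintype.card_fin]
  have hordτ : orderOf τ = b := by
    rw [hτ.1.orderOf, hτ.2, Finset.card_univ, Fintype.card_fin]
  set L := Nat.lcm a b with hL
  have hL0 : 0 < L := Nat.pos_of_ne_zero (Nat.lcm_ne_zero (by omega) (by omega))
  have hσL : σ ^ L = 1 := by
    rw [← orderOf_dvd_iff_pow_eq_one, hordσ]; exact Nat.dvd_lcm_left a b
  have hτL : τ ^ L = 1 := by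
    rw [← orderOf_dvd_iff_pow_eq_one, hordτ]; exact Nat.dvd_lcm_right a b
  set π := Equiv.prodCongr σ τ with hπ
  have hπL : π ^ (L : ℤ) = 1 := by
    rw [pch_zpow]
    simp only [zpow_natCast, hσL, hτL]
    exact Equiv.ext fun _ => rfl
  -- surjection from range L
  have hsub : (Finset.univ : Finset (Fin a × Fin b)) ⊆
      (Finset.range L).image (fun k => (π ^ k) ((0 : Fin a), (0 : Fin b))) := by
    intro q _
    obtain ⟨k, hk⟩ := htrans ((0 : Fin a), (0 : Fin b)) q
    have hm0 : 0 ≤ k % (L : ℤ) := Int.emod_nonneg k (by exact_mod_cast hL0.ne')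
    have hmL : k % (L : ℤ) < (L : ℤ) := Int.emod_lt_of_pos k (by exact_mod_cast hL0)
    refine Finset.mem_image.2 ⟨(k % (L : ℤ)).toNat, Finset.mem_range.2 ?_, ?_⟩
    · omega
    · have : π ^ (((k % (L : ℤ)).toNat : ℕ) : ℤ) = π ^ k := by
        rw [Int.toNat_of_nonneg hm0]
        conv_rhs => rw [← Int.mul_ediv_add_emod k (L : ℤ)]
        rw [zpow_add, zpow_mul, hπL, one_zpow, one_mul]
      rw [← zpow_natCast, this, hk]
  have hcard : a * b ≤ L := by
    calc a * b = (Finset.univ : Finset (Fin a × Fin b)).card := by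
          simp [Finset.card_univ]
      _ ≤ ((Finset.range L).image (fun k => (π ^ k) ((0 : Fin a), (0 : Fin b)))).card :=
          Finset.card_le_card hsub
      _ ≤ (Finset.range L).card := Finset.card_image_le
      _ = L := Finset.card_range L
  have hgl : Nat.gcd a b * L = a * b := Nat.gcd_mul_lcm a b
  have hg1 : 0 < Nat.gcd a b := Nat.gcd_pos_of_pos_left b (by omega)
  nlinarith [hcard, hgl, hg1, hL0]
end

section
/- For 2 < a = b, the imprimitive wreath product Sym(a) ≀ C₂ acting on {1,…,a}×{1,…,a} (with Sym(a)×Sym(a) acting coordinatewise and C₂ swapping the two coordinates) contains no cyclic subgroup acting regularly on the a² points. -/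
/-- Every point of `Fin a` has a period at most `a` under any permutation. -/
lemma small_period {a : ℕ} (σ : Equiv.Perm (Fin a)) (x : Fin a) :
    ∃ m : ℕ, 0 < m ∧ m ≤ a ∧ (σ ^ m) x = x := by
  have hcard : Fintype.card (Fin a) < Fintype.card (Fin (a + 1)) := by simp
  obtain ⟨i, j, hij, hfe⟩ :=
    Fintype.exists_ne_map_eq_of_card_lt (fun i : Fin (a + 1) => (σ ^ (i : ℕ)) x) hcard
  have hi := i.isLt
  have hj := j.isLt
  rcases hij.lt_or_gt with h | h
  · have hlt : (i : ℕ) < (j : ℕ) := h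
    refine ⟨(j : ℕ) - (i : ℕ), by omega, by omega, ?_⟩
    have hsplit : (σ ^ (j : ℕ)) x = (σ ^ (i : ℕ) * σ ^ ((j : ℕ) - (i : ℕ))) x := by
      rw [← pow_add]
      congr 2
      omega
    have h2 : (σ ^ (i : ℕ)) x = (σ ^ (i : ℕ)) ((σ ^ ((j : ℕ) - (i : ℕ))) x) := by
      rw [← Equiv.Perm.mul_apply, ← hsplit]
      exact hfe
    exact ((σ ^ (i : ℕ)).injective h2).symm
  · have hlt : (j : ℕ) < (i : ℕ) := h
    refine ⟨(i : ℕ) - (j : ℕ), by omega, by omega, ?_⟩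
    have hsplit : (σ ^ (i : ℕ)) x = (σ ^ (j : ℕ) * σ ^ ((i : ℕ) - (j : ℕ))) x := by
      rw [← pow_add]
      congr 2
      omega
    have h2 : (σ ^ (j : ℕ)) x = (σ ^ (j : ℕ)) ((σ ^ ((i : ℕ) - (j : ℕ))) x) := by
      rw [← Equiv.Perm.mul_apply, ← hsplit]
      exact hfe.symm
    exact ((σ ^ (j : ℕ)).injective h2).symm

/-- If `g` has a nontrivial power equal to 1 with small exponent, `g` can't be transitive. -/
lemma no_transitive_of_small_order {a : ℕ} (ha : 0 < a)
    (g : Equiv.Perm (Fin a × Fin a)) (n : ℕ) (hn : 0 < n) (hlt : n < a * a)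
    (hg1 : g ^ n = 1)
    (htrans : ∀ p q : Fin a × Fin a, ∃ k : ℤ, (g ^ k) p = q) : False := by
  set p0 : Fin a × Fin a := (⟨0, ha⟩, ⟨0, ha⟩) with hp0
  have hsurj : Function.Surjective (fun r : Fin n => (g ^ (r : ℕ)) p0) := by
    intro q
    obtain ⟨k, hk⟩ := htrans p0 q
    have hnz : (n : ℤ) ≠ 0 := by exact_mod_cast hn.ne'
    have hmod_nonneg : 0 ≤ k % (n : ℤ) := Int.emod_nonneg k hnz
    have hmod_lt : k % (n : ℤ) < n := Int.emod_lt_of_pos k (by exact_mod_cast hn)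
    refine ⟨⟨(k % (n : ℤ)).toNat, by omega⟩, ?_⟩
    show (g ^ (((k % (n : ℤ)).toNat : ℕ))) p0 = q
    have hgk : g ^ k = g ^ (k % (n : ℤ)) := by
      conv_lhs => rw [← Int.mul_ediv_add_emod k (n : ℤ)]
      rw [zpow_add, zpow_mul]
      have : g ^ (n : ℤ) = 1 := by rw [zpow_natCast, hg1]
      rw [this, one_zpow, one_mul]
    have heq : g ^ (((k % (n : ℤ)).toNat : ℤ)) = g ^ k := by
      rw [hgk]
      congr 1
      omega
    rw [← zpow_natCast g ((k % (n : ℤ)).toNat), heq, hk]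
  have hcard := Fintype.card_le_of_surjective _ hsurj
  simp [Fintype.card_prod] at hcard
  omega

theorem wreath_no_regular_cyclic (a : ℕ) (ha : 2 < a) :
    ¬ ∃ g : Equiv.Perm (Fin a × Fin a),
      (∃ σ τ : Equiv.Perm (Fin a),
        (∀ p : Fin a × Fin a, g p = (σ p.1, τ p.2)) ∨
        (∀ p : Fin a × Fin a, g p = (τ p.2, σ p.1))) ∧
      (∀ p q : Fin a × Fin a, ∃ k : ℤ, (g ^ k) p = q) ∧
      (∀ k : ℤ, ∀ p : Fin a × Fin a, (g ^ k) p = p → g ^ k = 1) := by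
  have ha0 : 0 < a := by omega
  rintro ⟨g, ⟨σ, τ, hform⟩, htrans, hfree⟩
  have hfreeN : ∀ n : ℕ, ∀ p : Fin a × Fin a, (g ^ n) p = p → g ^ n = 1 := by
    intro n p hp
    have := hfree (n : ℤ) p (by rwa [zpow_natCast])
    rwa [zpow_natCast] at this
  rcases hform with hco | hsw
  · -- coordinatewise case
    have hpow : ∀ m : ℕ, ∀ p : Fin a × Fin a, (g ^ m) p = ((σ ^ m) p.1, (τ ^ m) p.2) := by
      intro m
      induction m with
      | zero => intro p; simp
      | succ m ih =>
        intro p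
        rw [pow_succ, pow_succ, pow_succ]
        simp only [Equiv.Perm.mul_apply]
        rw [hco p, ih (σ p.1, τ p.2)]
    obtain ⟨m1, hm1pos, hm1le, hm1⟩ := small_period σ ⟨0, ha0⟩
    obtain ⟨m2, hm2pos, hm2le, hm2⟩ := small_period τ ⟨0, ha0⟩
    set n := Nat.lcm m1 m2 with hn
    have hnpos : 0 < n := Nat.lcm_pos hm1pos hm2pos
    have hfix1 : (σ ^ n) (⟨0, ha0⟩ : Fin a) = ⟨0, ha0⟩ := by
      obtain ⟨c, hc⟩ := Nat.dvd_lcm_left m1 m2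
      rw [← hn] at hc
      rw [hc, pow_mul]
      clear hc
      induction c with
      | zero => simp
      | succ c ih => rw [pow_succ, Equiv.Perm.mul_apply, hm1, ih]
    have hfix2 : (τ ^ n) (⟨0, ha0⟩ : Fin a) = ⟨0, ha0⟩ := by
      obtain ⟨c, hc⟩ := Nat.dvd_lcm_right m1 m2
      rw [← hn] at hc
      rw [hc, pow_mul]
      clear hc
      induction c with
      | zero => simp
      | succ c ih => rw [pow_succ, Equiv.Perm.mul_apply, hm2, ih]
    have hg1 : g ^ n = 1 := by
      apply hfreeN n (⟨0, ha0⟩, ⟨0, ha0⟩)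
      rw [hpow]
      simp [hfix1, hfix2]
    have hnlt : n < a * a := by
      have hle : n ≤ m1 * m2 :=
        Nat.le_of_dvd (by positivity)
          (Nat.lcm_dvd (Dvd.intro m2 rfl) (Dvd.intro_left m1 rfl))
      by_cases hcase : m1 = a ∧ m2 = a
      · have hna : n = a := by rw [hn, hcase.1, hcase.2, Nat.lcm_self]
        nlinarith
      · have hor : m1 < a ∨ m2 < a := by omega
        have : m1 * m2 < a * a := by
          rcases hor with h | h
          · nlinarith
          · nlinarith
        omega
    exact no_transitive_of_small_order ha0 g n hnpos hnlt hg1 htrans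
  · -- swap case
    set c1 : Equiv.Perm (Fin a) := τ * σ with hc1
    set c2 : Equiv.Perm (Fin a) := σ * τ with hc2
    have hg2 : ∀ p : Fin a × Fin a, (g ^ 2) p = (c1 p.1, c2 p.2) := by
      intro p
      rw [pow_two, Equiv.Perm.mul_apply, hsw p, hsw (τ p.2, σ p.1)]
      simp [hc1, hc2, Equiv.Perm.mul_apply]
    have hpow : ∀ m : ℕ, ∀ p : Fin a × Fin a,
        (g ^ (2 * m)) p = ((c1 ^ m) p.1, (c2 ^ m) p.2) := by
      intro m
      induction m with
      | zero => intro p; simp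
      | succ m ih =>
        intro p
        have h2m : 2 * (m + 1) = 2 * m + 2 := by ring
        rw [h2m, pow_add, Equiv.Perm.mul_apply, hg2 p, ih (c1 p.1, c2 p.2)]
        rw [pow_succ, pow_succ]
        simp [Equiv.Perm.mul_apply]
    obtain ⟨m, hmpos, hmle, hm⟩ := small_period c1 ⟨0, ha0⟩
    have hconj : c2 ^ m = σ * c1 ^ m * σ⁻¹ := by
      have h : c2 = σ * c1 * σ⁻¹ := by
        rw [hc1, hc2]
        group
      rw [h, conj_pow]
    have hfixp : (g ^ (2 * m)) (⟨0, ha0⟩, σ ⟨0, ha0⟩) = (⟨0, ha0⟩, σ ⟨0, ha0⟩) := by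
      rw [hpow]
      simp only [hconj, Equiv.Perm.mul_apply]
      rw [Equiv.Perm.inv_def, Equiv.symm_apply_apply, hm]
    have hg1 : g ^ (2 * m) = 1 := hfreeN (2 * m) _ hfixp
    have hnlt : 2 * m < a * a := by nlinarith
    exact no_transitive_of_small_order ha0 g (2 * m) (by omega) hnlt hg1 htrans
end

section
/- If a + b is odd, then the code C₁(a,b) := span⟨r_i + c_j : 1 ≤ i ≤ a, 1 ≤ j ≤ b⟩ equals C₀(a,b) := span⟨{r_i} ∪ {c_j}⟩. -/
/-- The code `C₁(a,b)`, spanned by the matrices `r_i + c_j`. -/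
def C1 (a b : ℕ) : Submodule (ZMod 2) (Matrix (Fin a) (Fin b) (ZMod 2)) :=
  Submodule.span (ZMod 2) {M | ∃ i j, M = rowMat a b i + colMat a b j}

theorem C1_eq_C0_of_odd (a b : ℕ) (ha : 1 ≤ a) (hb : 1 ≤ b) (hodd : Odd (a + b)) :
    C1 a b = C0 a b := by
  have hmemC1 : ∀ i j, rowMat a b i + colMat a b j ∈ C1 a b := fun i j =>
    Submodule.subset_span ⟨i, j, rfl⟩
  have h11 : (1 : ZMod 2) + 1 = 0 := rfl
  have hcast : ∀ n : ℕ, Odd n → (n : ZMod 2) = 1 := by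
    rintro n ⟨k, rfl⟩
    push_cast
    ring_nf
    rw [show ((2 : ZMod 2)) = 0 from rfl]
    ring
  -- the all-ones matrix lies in C1
  have hJ : (Matrix.of fun _ _ => (1 : ZMod 2) : Matrix (Fin a) (Fin b) (ZMod 2)) ∈ C1 a b := by
    have hsum : (Matrix.of fun _ _ => (1 : ZMod 2) : Matrix (Fin a) (Fin b) (ZMod 2))
        = ∑ i : Fin a, ∑ j : Fin b, (rowMat a b i + colMat a b j) := by
      funext i' j'
      simp only [Matrix.sum_apply, Matrix.add_apply]
      simp only [rowMat, colMat, Matrix.of_apply,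
        Finset.sum_add_distrib, Finset.sum_ite_eq, Finset.mem_univ, if_true,
        Finset.sum_const, Finset.card_univ, Fintype.card_fin, smul_ite, smul_zero,
        nsmul_eq_mul, mul_one]
      rw [show ((b : ZMod 2) + (a : ZMod 2)) = ((a + b : ℕ) : ZMod 2) by push_cast; ring,
        hcast _ hodd]
    rw [hsum]
    exact Submodule.sum_mem _ fun i _ => Submodule.sum_mem _ fun j _ => hmemC1 i j
  -- membership of all rows and columns in C1
  have hrowcol : (∀ i, rowMat a b i ∈ C1 a b) ∧ (∀ j, colMat a b j ∈ C1 a b) := by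
    rcases Nat.even_or_odd b with hbpar | hbpar
    · -- then a is odd
      have hapar : Odd a := by
        rcases Nat.even_or_odd a with h | h
        · exact absurd hodd (Nat.not_odd_iff_even.mpr (Nat.even_add.2 (iff_of_true h hbpar)))
        · exact h
      have hcol : ∀ j, colMat a b j ∈ C1 a b := by
        intro j
        have hsum : colMat a b j
            = (∑ i : Fin a, (rowMat a b i + colMat a b j))
              + (Matrix.of fun _ _ => (1 : ZMod 2)) := by
          funext i' j'
          simp only [Matrix.add_apply, Matrix.sum_apply]
          simp only [rowMat, colMat, Matrix.of_apply,
            Finset.sum_add_distrib, Finset.sum_ite_eq, Finset.mem_univ, if_true,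
            Finset.sum_const, Finset.card_univ, Fintype.card_fin, smul_ite, smul_zero,
            nsmul_eq_mul, mul_one]
          rw [hcast a hapar]
          by_cases h : j' = j <;> simp [h, h11]
        rw [hsum]
        exact add_mem (Submodule.sum_mem _ fun i _ => hmemC1 i j) hJ
      have hrow : ∀ i, rowMat a b i ∈ C1 a b := by
        intro i
        set j0 : Fin b := ⟨0, hb⟩
        have hsum : rowMat a b i = (rowMat a b i + colMat a b j0) + colMat a b j0 := by
          funext i' j'
          simp only [Matrix.add_apply, rowMat, colMat]
          by_cases h : j' = j0 <;> by_cases h2 : i' = i <;> simp [h, h2, h11]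
        rw [hsum]
        exact add_mem (hmemC1 i j0) (hcol j0)
      exact ⟨hrow, hcol⟩
    · have hrow : ∀ i, rowMat a b i ∈ C1 a b := by
        intro i
        have hsum : rowMat a b i
            = (∑ j : Fin b, (rowMat a b i + colMat a b j))
              + (Matrix.of fun _ _ => (1 : ZMod 2)) := by
          funext i' j'
          simp only [Matrix.add_apply, Matrix.sum_apply]
          simp only [rowMat, colMat, Matrix.of_apply,
            Finset.sum_add_distrib, Finset.sum_ite_eq, Finset.mem_univ, if_true,
            Finset.sum_const, Finset.card_univ, Fintype.card_fin, smul_ite, smul_zero,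
            nsmul_eq_mul, mul_one]
          rw [hcast b hbpar]
          by_cases h : i' = i <;> simp [h, h11]
        rw [hsum]
        exact add_mem (Submodule.sum_mem _ fun j _ => hmemC1 i j) hJ
      have hcol : ∀ j, colMat a b j ∈ C1 a b := by
        intro j
        set i0 : Fin a := ⟨0, ha⟩
        have hsum : colMat a b j = (rowMat a b i0 + colMat a b j) + rowMat a b i0 := by
          funext i' j'
          simp only [Matrix.add_apply, rowMat, colMat]
          by_cases h : i' = i0 <;> by_cases h2 : j' = j <;> simp [h, h2, h11]
        rw [hsum]
        exact add_mem (hmemC1 i0 j) (hrow i0)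
      exact ⟨hrow, hcol⟩
  apply le_antisymm
  · rw [C1, Submodule.span_le]
    rintro M ⟨i, j, rfl⟩
    exact add_mem (Submodule.subset_span (Or.inl ⟨i, rfl⟩))
      (Submodule.subset_span (Or.inr ⟨j, rfl⟩))
  · rw [C0, Submodule.span_le]
    rintro M (⟨i, rfl⟩ | ⟨j, rfl⟩)
    · exact hrowcol.1 i
    · exact hrowcol.2 j
end

section
/- If a and b are both odd, then C₁(a,b) equals the set of codewords of C₀(a,b) of even Hamming weight. -/
def sigmaMap (a b : ℕ) : Matrix (Fin a) (Fin b) (ZMod 2) →ₗ[ZMod 2] ZMod 2 where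
  toFun v := ∑ p : Fin a × Fin b, v p.1 p.2
  map_add' u v := by simp [Finset.sum_add_distrib]
  map_smul' c v := by simp [Finset.mul_sum]

lemma sigma_eq_wt {a b : ℕ} (v : Matrix (Fin a) (Fin b) (ZMod 2)) :
    sigmaMap a b v = (wt v : ZMod 2) := by
  classical
  have h1 : ∀ x : ZMod 2, x ≠ 0 → x = 1 := by decide
  have : sigmaMap a b v
      = ∑ p ∈ Finset.univ.filter (fun p : Fin a × Fin b => v p.1 p.2 ≠ 0), v p.1 p.2 :=
    (Finset.sum_filter_ne_zero _).symm
  rw [this, Finset.sum_congr rfl (fun p hp => h1 _ (Finset.mem_filter.mp hp).2)]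
  simp [wt, Finset.sum_const]

lemma even_wt_iff {a b : ℕ} (v : Matrix (Fin a) (Fin b) (ZMod 2)) :
    Even (wt v) ↔ sigmaMap a b v = 0 := by
  rw [sigma_eq_wt, ZMod.natCast_eq_zero_iff, even_iff_two_dvd]

lemma sigma_row {a b : ℕ} (hb : Odd b) (i : Fin a) : sigmaMap a b (rowMat a b i) = 1 := by
  have : (b : ZMod 2) = 1 := by
    rw [← ZMod.natCast_mod, Nat.odd_iff.mp hb]; rfl
  simp only [sigmaMap, LinearMap.coe_mk, AddHom.coe_mk, rowMat, Fintype.sum_prod_type]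
  simp [Finset.sum_ite_eq, this]

lemma sigma_col {a b : ℕ} (ha : Odd a) (j : Fin b) : sigmaMap a b (colMat a b j) = 1 := by
  have : (a : ZMod 2) = 1 := by
    rw [← ZMod.natCast_mod, Nat.odd_iff.mp ha]; rfl
  simp only [sigmaMap, LinearMap.coe_mk, AddHom.coe_mk, colMat, Fintype.sum_prod_type]
  simp [Finset.sum_ite_eq, this]


lemma C1_le_C0 (a b : ℕ) : C1 a b ≤ C0 a b := by
  rw [C1, Submodule.span_le]
  rintro M ⟨i, j, rfl⟩
  exact Submodule.add_mem _
    (Submodule.subset_span (Or.inl ⟨i, rfl⟩))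
    (Submodule.subset_span (Or.inr ⟨j, rfl⟩))

lemma sigma_zero_of_mem_C1 {a b : ℕ} (ha : Odd a) (hb : Odd b)
    {v : Matrix (Fin a) (Fin b) (ZMod 2)} (hv : v ∈ C1 a b) : sigmaMap a b v = 0 := by
  induction hv using Submodule.span_induction with
  | mem x hx =>
      obtain ⟨i, j, rfl⟩ := hx
      rw [map_add, sigma_row hb, sigma_col ha]; decide
  | zero => simp
  | add x y _ _ hx hy => rw [map_add, hx, hy, add_zero]
  | smul c x _ hx => rw [map_smul, hx, smul_zero]

lemma mem_C1_of_mem_C0 {a b : ℕ} (ha : Odd a) (hb : Odd b)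
    {v : Matrix (Fin a) (Fin b) (ZMod 2)} (hv : v ∈ C0 a b)
    (hs : sigmaMap a b v = 0) : v ∈ C1 a b := by
  classical
  have hapos : 0 < a := ha.pos
  have hbpos : 0 < b := hb.pos
  set i0 : Fin a := ⟨0, hapos⟩
  set j0 : Fin b := ⟨0, hbpos⟩
  rw [C0, Submodule.span_union, Submodule.mem_sup] at hv
  obtain ⟨y, hy, z, hz, rfl⟩ := hv
  obtain ⟨x, hx⟩ := (Submodule.mem_span_range_iff_exists_fun _).mp hy
  obtain ⟨w, hw⟩ := (Submodule.mem_span_range_iff_exists_fun _).mp hz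
  set sX : ZMod 2 := ∑ i, x i
  set sY : ZMod 2 := ∑ j, w j
  have hsy : sigmaMap a b y = sX := by
    rw [← hx, map_sum]
    simp [sigma_row hb, sX]
  have hsz : sigmaMap a b z = sY := by
    rw [← hw, map_sum]
    simp [sigma_col ha, sY]
  have hsum : sX + sY = 0 := by rw [← hsy, ← hsz, ← map_add, hs]
  have h2 : ∀ u t : ZMod 2, u + t = 0 → t = u := by decide
  have hYX : sY = sX := h2 _ _ hsum
  have gen : ∀ (i : Fin a) (j : Fin b), rowMat a b i + colMat a b j ∈ C1 a b :=
    fun i j => Submodule.subset_span ⟨i, j, rfl⟩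
  have key : y + z = (∑ i, x i • (rowMat a b i + colMat a b j0))
      + (∑ j, w j • (rowMat a b i0 + colMat a b j))
      + sX • (rowMat a b i0 + colMat a b j0) := by
    have e1 : ∑ i, x i • (rowMat a b i + colMat a b j0)
        = y + sX • colMat a b j0 := by
      simp only [smul_add, Finset.sum_add_distrib, ← Finset.sum_smul, hx, sX]
    have e2 : ∑ j, w j • (rowMat a b i0 + colMat a b j)
        = sY • rowMat a b i0 + z := by
      simp only [smul_add, Finset.sum_add_distrib, ← Finset.sum_smul, hw, sY]
    rw [e1, e2, hYX, smul_add]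
    have hc : ∀ m : Matrix (Fin a) (Fin b) (ZMod 2), sX • m + sX • m = 0 := by
      intro m; rw [← add_smul, CharTwo.add_self_eq_zero, zero_smul]
    abel_nf
    rw [show (2 : ℤ) • (sX • rowMat a b i0) = sX • rowMat a b i0 + sX • rowMat a b i0 by
        rw [two_zsmul],
      show (2 : ℤ) • (sX • colMat a b j0) = sX • colMat a b j0 + sX • colMat a b j0 by
        rw [two_zsmul]]
    rw [hc, hc]
    abel
  rw [key]
  exact Submodule.add_mem _
    (Submodule.add_mem _
      (Submodule.sum_smul_mem _ _ (fun i _ => gen i j0))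
      (Submodule.sum_smul_mem _ _ (fun j _ => gen i0 j)))
    (Submodule.smul_mem _ _ (gen i0 j0))

theorem C1_eq_even_subcode (a b : ℕ) (ha : Odd a) (hb : Odd b) :
    ∀ v : Matrix (Fin a) (Fin b) (ZMod 2),
      v ∈ C1 a b ↔ (v ∈ C0 a b ∧ Even (wt v)) := by
  intro v
  constructor
  · intro hv
    exact ⟨C1_le_C0 a b hv, (even_wt_iff v).mpr (sigma_zero_of_mem_C1 ha hb hv)⟩
  · rintro ⟨h0, he⟩
    exact mem_C1_of_mem_C0 ha hb h0 ((even_wt_iff v).mp he)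
end

section
/- Suppose a + b is even and 2 < b. Then C₁(a,b) has dimension a + b - 2; its minimum distance is 2a if a < b, and 2a - 2 if 1 < a = b. -/
open Finset

/-! ### Auxiliary numeric lemmas -/

lemma coreNum (a b s t : ℕ) (hab : a ≤ b) (hb : 2 < b) (h2t : 2*t ≤ b)
    (hpar : s % 2 = t % 2) (hs : s ≤ a) (ht : t ≤ b)
    (hw : s*(b-t)+(a-s)*t ≠ 0) :
    (a+2 ≤ b → 2*a ≤ s*(b-t)+(a-s)*t) ∧ 2*a ≤ s*(b-t)+(a-s)*t + 2 := by
  match t with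
  | 0 =>
    have hs0 : s ≠ 0 := by rintro rfl; simp at hw
    have h2s : 2 ≤ s := by omega
    have : 2*b ≤ s*b := Nat.mul_le_mul_right _ h2s
    simp only [Nat.sub_zero, Nat.mul_zero, Nat.add_zero] at *
    omega
  | 1 =>
    have hs1 : 1 ≤ s := by omega
    have e : s*(b-1) + (a-s)*1 = s*(b-2) + a := by
      have : b - 1 = (b-2) + 1 := by omega
      rw [this, Nat.mul_add]; omega
    have h1 : b-2 ≤ s*(b-2) := Nat.le_mul_of_pos_left _ hs1
    rw [e]; omega
  | (t+2) =>
    have h3 : t+2 ≤ b-(t+2) := by omega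
    have h4 : s*(t+2) ≤ s*(b-(t+2)) := Nat.mul_le_mul_left _ h3
    have e : s*(t+2) + (a-s)*(t+2) = a*(t+2) := by
      rw [← Nat.add_mul]; congr 1; omega
    have h5 : 2*a ≤ a*(t+2) := by nlinarith
    omega

lemma keyNum (a b s t : ℕ) (hab : a ≤ b) (hb : 2 < b)
    (hpar : s % 2 = t % 2) (hparab : a % 2 = b % 2) (hs : s ≤ a) (ht : t ≤ b)
    (hw : s*(b-t)+(a-s)*t ≠ 0) :
    (if a < b then 2*a else 2*a-2) ≤ s*(b-t)+(a-s)*t := by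
  rcases le_or_gt (2*t) b with h2t | h2t
  · have := coreNum a b s t hab hb h2t hpar hs ht hw
    split_ifs with h <;> omega
  · have e : (a-s)*(b-(b-t)) + (a-(a-s))*(b-t) = s*(b-t)+(a-s)*t := by
      have e1 : b-(b-t) = t := by omega
      have e2 : a-(a-s) = s := by omega
      rw [e1, e2]; omega
    have := coreNum a b (a-s) (b-t) hab hb (by omega) (by omega) (by omega) (by omega)
      (by rw [e]; exact hw)
    rw [e] at this
    split_ifs with h <;> omega

/-! ### Weight computations -/

lemma wt_eq_zero_iff {a b : ℕ} (M : Matrix (Fin a) (Fin b) (ZMod 2)) :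
    wt M = 0 ↔ M = 0 := by
  rw [wt, Finset.card_eq_zero, Finset.filter_eq_empty_iff]
  constructor
  · intro h; ext i j; simpa using h (Finset.mem_univ (i, j))
  · rintro rfl p _; simp

lemma wt_phi {a b : ℕ} (x : Fin a → ZMod 2) (y : Fin b → ZMod 2) :
    wt (Matrix.of fun i j => x i + y j) =
      (univ.filter fun i => x i = 1).card * (b - (univ.filter fun j => y j = 1).card)
      + (a - (univ.filter fun i => x i = 1).card) * (univ.filter fun j => y j = 1).card := by
  classical
  have hsc : (univ.filter fun i => ¬ x i = 1).card
      = a - (univ.filter fun i => x i = 1).card := by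
    have := Finset.card_filter_add_card_filter_not
      (s := (univ : Finset (Fin a))) (p := fun i => x i = 1)
    simp only [Finset.card_univ, Fintype.card_fin] at this
    omega
  have htc : (univ.filter fun j => ¬ y j = 1).card
      = b - (univ.filter fun j => y j = 1).card := by
    have := Finset.card_filter_add_card_filter_not
      (s := (univ : Finset (Fin b))) (p := fun j => y j = 1)
    simp only [Finset.card_univ, Fintype.card_fin] at this
    omega
  have key : ∀ u v : ZMod 2, (¬ (u + v = 0)) ↔ ((u = 1 ∧ ¬ v = 1) ∨ (¬ u = 1 ∧ v = 1)) := by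
    decide
  have hsplit : (univ.filter fun p : Fin a × Fin b => ¬ ((Matrix.of fun i j => x i + y j) p.1 p.2 = 0)) =
      ((univ ×ˢ univ).filter fun p : Fin a × Fin b => x p.1 = 1 ∧ ¬ y p.2 = 1)
      ∪ ((univ ×ˢ univ).filter fun p : Fin a × Fin b => ¬ x p.1 = 1 ∧ y p.2 = 1) := by
    rw [← Finset.filter_or, ← Finset.univ_product_univ]
    apply Finset.filter_congr
    intro p _
    simpa using key (x p.1) (y p.2)
  rw [wt]
  simp only [ne_eq]
  have e1 : ((univ ×ˢ univ).filter fun p : Fin a × Fin b => x p.1 = 1 ∧ ¬ y p.2 = 1)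
      = (univ.filter fun i => x i = 1) ×ˢ (univ.filter fun j => ¬ y j = 1) := by
    ext p; simp [Finset.mem_filter, Finset.mem_product]
  have e2 : ((univ ×ˢ univ).filter fun p : Fin a × Fin b => ¬ x p.1 = 1 ∧ y p.2 = 1)
      = (univ.filter fun i => ¬ x i = 1) ×ˢ (univ.filter fun j => y j = 1) := by
    ext p; simp [Finset.mem_filter, Finset.mem_product]
  rw [hsplit, Finset.card_union_of_disjoint, e1, e2, Finset.card_product,
    Finset.card_product, hsc, htc]
  · rw [Finset.disjoint_filter]
    tauto

lemma sum_eq_card {n : ℕ} (x : Fin n → ZMod 2) :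
    ∑ i, x i = ((univ.filter fun i => x i = 1).card : ZMod 2) := by
  classical
  rw [Finset.card_filter]
  push_cast
  refine Finset.sum_congr rfl fun i _ => ?_
  have h : ∀ u : ZMod 2, u = if u = 1 then (1:ZMod 2) else 0 := by decide
  exact h (x i)

/-! ### The linear maps -/

/-- The linear map sending `(x, y)` to the matrix with entries `x i + y j`. -/
def phiMap (a b : ℕ) : ((Fin a → ZMod 2) × (Fin b → ZMod 2)) →ₗ[ZMod 2]
    Matrix (Fin a) (Fin b) (ZMod 2) where
  toFun p := Matrix.of fun i j => p.1 i + p.2 j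
  map_add' p q := by
    funext i j
    show (p.1 i + q.1 i) + (p.2 j + q.2 j) = (p.1 i + p.2 j) + (q.1 i + q.2 j)
    ring
  map_smul' c p := by
    funext i j
    show (c * p.1 i) + (c * p.2 j) = c * (p.1 i + p.2 j)
    ring

/-- The parity functional `(x, y) ↦ Σ x + Σ y`. -/
def psiMap (a b : ℕ) : ((Fin a → ZMod 2) × (Fin b → ZMod 2)) →ₗ[ZMod 2] ZMod 2 where
  toFun p := (∑ i, p.1 i) + (∑ j, p.2 j)
  map_add' p q := by
    show (∑ i, (p.1 i + q.1 i)) + (∑ j, (p.2 j + q.2 j)) = _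
    rw [Finset.sum_add_distrib, Finset.sum_add_distrib]; ring
  map_smul' c p := by
    show (∑ i, c * p.1 i) + (∑ j, c * p.2 j) = c * _
    rw [← Finset.mul_sum, ← Finset.mul_sum]; ring

lemma C1_eq_map (a b : ℕ) (ha : 1 ≤ a) (hb : 1 ≤ b) :
    C1 a b = (LinearMap.ker (psiMap a b)).map (phiMap a b) := by
  have i0 : Fin a := ⟨0, ha⟩
  have j0 : Fin b := ⟨0, hb⟩
  apply le_antisymm
  · rw [C1, Submodule.span_le]
    rintro M ⟨i, j, rfl⟩
    refine ⟨((fun i' => if i' = i then 1 else 0), (fun j' => if j' = j then 1 else 0)), ?_, ?_⟩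
    · show (∑ i', if i' = i then (1 : ZMod 2) else 0) + (∑ j', if j' = j then (1 : ZMod 2) else 0) = 0
      rw [Finset.sum_ite_eq' univ i (fun _ => (1:ZMod 2)),
        Finset.sum_ite_eq' univ j (fun _ => (1:ZMod 2))]
      simp only [Finset.mem_univ, if_true]
      decide
    · funext i' j'
      show (if i' = i then (1:ZMod 2) else 0) + (if j' = j then (1:ZMod 2) else 0)
        = (rowMat a b i + colMat a b j) i' j'
      simp [rowMat, colMat, Matrix.add_apply]
  · rintro M ⟨⟨x, y⟩, hV, rfl⟩
    have hV' : (∑ i, x i) + (∑ j, y j) = 0 := hV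
    set σ : ZMod 2 := ∑ i, x i with hσ
    have hy : (∑ j, y j) = σ := by
      have : ∀ u v : ZMod 2, u + v = 0 → v = u := by decide
      exact this _ _ hV'
    have hdecomp : phiMap a b (x, y) =
        (∑ i, x i • (rowMat a b i + colMat a b j0))
        + (∑ j, y j • (rowMat a b i0 + colMat a b j))
        + σ • (rowMat a b i0 + colMat a b j0) := by
      funext i j
      show x i + y j = _
      simp only [Matrix.add_apply, Matrix.sum_apply, Matrix.smul_apply, rowMat, colMat,
        smul_eq_mul, mul_add, Finset.sum_add_distrib,
        mul_ite, mul_one, mul_zero]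
      rw [Finset.sum_ite_eq univ i x]
      rw [Finset.sum_ite_eq univ j y]
      simp only [Finset.mem_univ, if_true]
      rw [show (∑ i', if j = j0 then x i' else 0) = if j = j0 then σ else 0 by
        split_ifs <;> simp [hσ]]
      rw [show (∑ j', if i = i0 then y j' else 0) = if i = i0 then σ else 0 by
        split_ifs <;> simp [hy]]
      have h2 : ∀ z : ZMod 2, z * 2 = 0 := by decide
      have h4 : ∀ z : ZMod 2, z * 4 = 0 := by decide
      by_cases hi : i = i0 <;> by_cases hj : j = j0 <;> simp [hi, hj] <;>
        (try ring) <;> simp [h2, h4]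
    rw [hdecomp]
    refine Submodule.add_mem _ (Submodule.add_mem _ ?_ ?_) ?_
    · exact Submodule.sum_mem _ fun i _ => Submodule.smul_mem _ _
        (Submodule.subset_span ⟨i, j0, rfl⟩)
    · exact Submodule.sum_mem _ fun j _ => Submodule.smul_mem _ _
        (Submodule.subset_span ⟨i0, j, rfl⟩)
    · exact Submodule.smul_mem _ _ (Submodule.subset_span ⟨i0, j0, rfl⟩)

lemma ker_phiMap (a b : ℕ) (ha : 1 ≤ a) (hb : 1 ≤ b) :
    LinearMap.ker (phiMap a b)
      = Submodule.span (ZMod 2) {((fun _ => 1 : Fin a → ZMod 2), (fun _ => 1 : Fin b → ZMod 2))} := by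
  have i0 : Fin a := ⟨0, ha⟩
  have j0 : Fin b := ⟨0, hb⟩
  apply le_antisymm
  · rintro ⟨x, y⟩ h
    have h' : ∀ i j, x i + y j = 0 := by
      intro i j
      have := congrArg (fun M : Matrix (Fin a) (Fin b) (ZMod 2) => M i j) (LinearMap.mem_ker.mp h)
      exact this
    have hcancel : ∀ u v : ZMod 2, u + v = 0 → u = v := by decide
    rw [Submodule.mem_span_singleton]
    refine ⟨x i0, ?_⟩
    have hx : ∀ i, x i = x i0 := fun i => by
      have h1 := h' i j0; have h2 := h' i0 j0
      have : ∀ u v w : ZMod 2, u + w = 0 → v + w = 0 → u = v := by decide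
      exact this _ _ _ h1 h2
    have hy : ∀ j, y j = x i0 := fun j => (hcancel _ _ (h' i0 j)).symm
    refine Prod.ext ?_ ?_
    · funext k; show x i0 • (1:ZMod 2) = x k; rw [hx k]; simp
    · funext k; show x i0 • (1:ZMod 2) = y k; rw [hy k]; simp
  · rw [Submodule.span_le, Set.singleton_subset_iff]
    refine LinearMap.mem_ker.mpr ?_
    funext i j
    show (1 : ZMod 2) + 1 = 0
    decide

lemma finrank_ker_psi (a b : ℕ) (ha : 1 ≤ a) :
    Module.finrank (ZMod 2) (LinearMap.ker (psiMap a b)) + 1 = a + b := by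
  have hsurj : Function.Surjective (psiMap a b) := by
    intro c
    refine ⟨((fun i => if i = (⟨0, ha⟩ : Fin a) then c else 0), 0), ?_⟩
    show (∑ i, if i = (⟨0, ha⟩ : Fin a) then c else 0) + (∑ _j : Fin b, (0:ZMod 2)) = c
    rw [Finset.sum_ite_eq' univ (⟨0, ha⟩ : Fin a) (fun _ => c)]
    simp
  have hrn := LinearMap.finrank_range_add_finrank_ker (psiMap a b)
  rw [LinearMap.range_eq_top.mpr hsurj] at hrn
  have hdim : Module.finrank (ZMod 2) ((Fin a → ZMod 2) × (Fin b → ZMod 2)) = a + b := by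
    simp [Module.finrank_prod]
  rw [hdim] at hrn
  have : Module.finrank (ZMod 2) (⊤ : Submodule (ZMod 2) (ZMod 2)) = 1 := by
    simp [finrank_top]
  omega

theorem dim_minDistance_C1 (a b : ℕ) (ha : 1 ≤ a) (hab : a ≤ b) (hb : 2 < b)
    (heven : Even (a + b)) :
    Module.finrank (ZMod 2) (C1 a b) = a + b - 2 ∧
    (∀ v ∈ C1 a b, v ≠ 0 → (if a < b then 2 * a else 2 * a - 2) ≤ wt v) ∧
    (∃ v ∈ C1 a b, v ≠ 0 ∧ wt v = if a < b then 2 * a else 2 * a - 2) := by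
  have hb1 : 1 ≤ b := by omega
  have hparab : a % 2 = b % 2 := by
    rcases heven with ⟨k, hk⟩; omega
  have hC1 := C1_eq_map a b ha hb1
  -- the special kernel element
  set onep : (Fin a → ZMod 2) × (Fin b → ZMod 2) :=
    ((fun _ => 1), (fun _ => 1)) with honep
  have honeV : onep ∈ LinearMap.ker (psiMap a b) := by
    show (∑ _i : Fin a, (1:ZMod 2)) + (∑ _j : Fin b, (1:ZMod 2)) = 0
    rw [Finset.sum_const, Finset.sum_const, Finset.card_univ, Finset.card_univ,
      Fintype.card_fin, Fintype.card_fin, nsmul_eq_mul, nsmul_eq_mul, mul_one, mul_one,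
      ← Nat.cast_add]
    rw [ZMod.natCast_eq_zero_iff]
    exact heven.two_dvd
  refine ⟨?_, ?_, ?_⟩
  · -- dimension
    set L : (LinearMap.ker (psiMap a b)) →ₗ[ZMod 2] Matrix (Fin a) (Fin b) (ZMod 2) :=
      (phiMap a b).comp (LinearMap.ker (psiMap a b)).subtype with hL
    have hrange : LinearMap.range L = C1 a b := by
      rw [hC1, hL, LinearMap.range_comp, Submodule.range_subtype]
    have hkerL : LinearMap.ker L = Submodule.span (ZMod 2)
        {(⟨onep, honeV⟩ : LinearMap.ker (psiMap a b))} := by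
      apply le_antisymm
      · rintro ⟨p, hp⟩ hmem
        have : p ∈ LinearMap.ker (phiMap a b) := hmem
        rw [ker_phiMap a b ha hb1, Submodule.mem_span_singleton] at this
        obtain ⟨c, hc⟩ := this
        rw [Submodule.mem_span_singleton]
        exact ⟨c, Subtype.ext hc⟩
      · rw [Submodule.span_le, Set.singleton_subset_iff]
        show phiMap a b onep = 0
        funext i j
        show (1 : ZMod 2) + 1 = 0
        decide
    have hkone : (⟨onep, honeV⟩ : LinearMap.ker (psiMap a b)) ≠ 0 := by
      intro h
      have := congrFun (congrArg (fun p => p.1.1) h) ⟨0, ha⟩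
      simpa [honep] using this
    have hdimker : Module.finrank (ZMod 2) (LinearMap.ker L) = 1 := by
      rw [hkerL]
      exact finrank_span_singleton hkone
    have hrn := LinearMap.finrank_range_add_finrank_ker L
    rw [hrange, hdimker] at hrn
    have hV := finrank_ker_psi a b ha
    omega
  · -- lower bound
    intro v hv hv0
    rw [hC1] at hv
    obtain ⟨⟨x, y⟩, hV, rfl⟩ := hv
    have hV' : (∑ i, x i) + (∑ j, y j) = 0 := hV
    rw [sum_eq_card x, sum_eq_card y, ← Nat.cast_add,
      ZMod.natCast_eq_zero_iff] at hV'
    set s := (univ.filter fun i => x i = 1).card with hs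
    set t := (univ.filter fun j => y j = 1).card with ht
    have hwt : wt (phiMap a b (x, y)) = s*(b-t)+(a-s)*t := wt_phi x y
    have hsa : s ≤ a := by
      have := Finset.card_filter_le (univ : Finset (Fin a)) (fun i => x i = 1)
      simpa using this
    have htb : t ≤ b := by
      have := Finset.card_filter_le (univ : Finset (Fin b)) (fun j => y j = 1)
      simpa using this
    have hwne : s*(b-t)+(a-s)*t ≠ 0 := by
      rw [← hwt]
      intro h
      exact hv0 ((wt_eq_zero_iff _).mp h)
    rw [hwt]
    exact keyNum a b s t hab hb (by omega) hparab hsa htb hwne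
  · -- existence of a minimum-weight codeword
    rcases lt_or_eq_of_le hab with hlt | heq
    · -- a < b : take c_{j0} + c_{j1}
      have hj01 : (⟨0, by omega⟩ : Fin b) ≠ (⟨1, by omega⟩ : Fin b) := by
        intro h; simpa using congrArg Fin.val h
      set j0 : Fin b := ⟨0, by omega⟩
      set j1 : Fin b := ⟨1, by omega⟩
      set y : Fin b → ZMod 2 :=
        fun j => (if j = j0 then 1 else 0) + (if j = j1 then 1 else 0) with hy
      refine ⟨phiMap a b (0, y), ?_, ?_, ?_⟩
      · rw [hC1]
        refine ⟨(0, y), ?_, rfl⟩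
        show (∑ _i : Fin a, (0:ZMod 2)) + (∑ j, y j) = 0
        rw [Finset.sum_const, hy]
        simp only [smul_zero, zero_add]
        rw [Finset.sum_add_distrib, Finset.sum_ite_eq' univ j0 (fun _ => (1:ZMod 2)),
          Finset.sum_ite_eq' univ j1 (fun _ => (1:ZMod 2))]
        simp only [Finset.mem_univ, if_true]
        decide
      · intro h
        have := congrFun (congrFun h ⟨0, ha⟩) j0
        change (0 : Fin a → ZMod 2) ⟨0, ha⟩ + y j0 = 0 at this
        simp [phiMap, LinearMap.coe_mk, AddHom.coe_mk, hy, hj01] at this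
      · have hyfilter : (univ.filter fun j => y j = 1) = {j0, j1} := by
          ext j
          by_cases h0 : j = j0 <;> by_cases h1 : j = j1 <;>
            simp [hy, h0, h1, hj01, Ne.symm hj01]
        have hxfilter : (univ.filter fun i => (0 : Fin a → ZMod 2) i = 1) = ∅ := by
          ext i; simp
        have hcard2 : ({j0, j1} : Finset (Fin b)).card = 2 := by
          rw [Finset.card_insert_of_notMem (by simp [hj01]), Finset.card_singleton]
        have hwt : wt ((phiMap a b) (0, y)) = 0*(b-2) + (a-0)*2 := by
          have h := wt_phi (0 : Fin a → ZMod 2) y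
          rw [hxfilter, hyfilter, Finset.card_empty, hcard2] at h
          exact h
        rw [if_pos hlt, hwt]
        omega
    · -- a = b : take r_{i0} + c_{j0}
      set i0 : Fin a := ⟨0, ha⟩
      set j0 : Fin b := ⟨0, by omega⟩
      set x : Fin a → ZMod 2 := fun i => if i = i0 then 1 else 0 with hx
      set y : Fin b → ZMod 2 := fun j => if j = j0 then 1 else 0 with hy
      refine ⟨phiMap a b (x, y), ?_, ?_, ?_⟩
      · rw [hC1]
        refine ⟨(x, y), ?_, rfl⟩
        show (∑ i, x i) + (∑ j, y j) = 0
        rw [hx, hy, Finset.sum_ite_eq' univ i0 (fun _ => (1:ZMod 2)),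
          Finset.sum_ite_eq' univ j0 (fun _ => (1:ZMod 2))]
        simp only [Finset.mem_univ, if_true]
        decide
      · intro h
        have hj1 : (⟨1, by omega⟩ : Fin b) ≠ j0 := by
          intro hcontra; simpa using congrArg Fin.val hcontra
        have := congrFun (congrFun h i0) ⟨1, by omega⟩
        change x i0 + y ⟨1, by omega⟩ = 0 at this
        simp [phiMap, LinearMap.coe_mk, AddHom.coe_mk, hx, hy, hj1] at this
      · have hxfilter : (univ.filter fun i => x i = 1) = {i0} := by
          ext i; by_cases h : i = i0 <;> simp [hx, h]
        have hyfilter : (univ.filter fun j => y j = 1) = {j0} := by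
          ext j; by_cases h : j = j0 <;> simp [hy, h]
        have hwt : wt ((phiMap a b) (x, y)) = 1*(b-1) + (a-1)*1 := by
          have h := wt_phi x y
          rw [hxfilter, hyfilter, Finset.card_singleton, Finset.card_singleton] at h
          exact h
        rw [if_neg (by omega), hwt]
        omega
end

section
/- Let N ≥ 3 and let C ≤ F₂^N be a linear code invariant under the alternating group Alt(N) acting by coordinate permutations. Then C is one of the four elementary codes: {0}, F₂·(1,…,1), the even-weight code {v : wt(v) ≡ 0 mod 2}, or all of F₂^N. Consequently Aut(C) ≠ Alt(N) for any binary linear code C of length N ≥ 3. -/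
/-- The Hamming weight of a vector in `F₂^N`. -/
def hwt {N : ℕ} (v : Fin N → ZMod 2) : ℕ :=
  (Finset.univ.filter fun i => v i ≠ 0).card

namespace AltCode

variable {N : ℕ}

lemma zmod2_cases (x : ZMod 2) : x = 0 ∨ x = 1 := by revert x; decide

lemma hwt_cast (v : Fin N → ZMod 2) : ((hwt v : ℕ) : ZMod 2) = ∑ i, v i := by
  rw [hwt, Finset.card_filter, Nat.cast_sum]
  apply Finset.sum_congr rfl
  intro i _
  rcases zmod2_cases (v i) with h | h <;> simp [h]

lemma even_hwt_iff (v : Fin N → ZMod 2) : Even (hwt v) ↔ ∑ i, v i = 0 := by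
  rw [← hwt_cast, ZMod.natCast_eq_zero_iff]
  exact even_iff_two_dvd

lemma hwt_comp (v : Fin N → ZMod 2) (σ : Equiv.Perm (Fin N)) :
    hwt (fun i => v (σ i)) = hwt v := by
  unfold hwt
  apply Finset.card_bij (fun a _ => σ a)
  · intro a ha; simp only [Finset.mem_filter, Finset.mem_univ, true_and] at *; exact ha
  · intro a _ b _ h; exact σ.injective h
  · intro b hb
    refine ⟨σ.symm b, ?_, by simp⟩
    simp only [Finset.mem_filter, Finset.mem_univ, true_and] at *
    simpa using hb

def pairVec (a b : Fin N) : Fin N → ZMod 2 := fun p => if p = a ∨ p = b then 1 else 0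

lemma pairVec_symm (a b : Fin N) : pairVec a b = pairVec b a := by
  funext p; simp [pairVec, or_comm]

lemma pairVec_comp (a b : Fin N) (σ : Equiv.Perm (Fin N)) :
    (fun p => pairVec a b (σ p)) = pairVec (σ.symm a) (σ.symm b) := by
  funext p
  simp only [pairVec, Equiv.eq_symm_apply]

lemma pairVec_add {a i j : Fin N} (hai : a ≠ i) (haj : a ≠ j) (hij : i ≠ j) :
    pairVec a i + pairVec a j = pairVec i j := by
  funext p
  by_cases h1 : p = a <;> by_cases h2 : p = i <;> by_cases h3 : p = j <;>
    simp_all [pairVec] <;> decide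

lemma cyc_apply {a b c : Fin N} (hab : a ≠ b) (hbc : b ≠ c) (hac : a ≠ c) :
    (Equiv.swap a b * Equiv.swap b c) a = b ∧
    (Equiv.swap a b * Equiv.swap b c) b = c ∧
    (Equiv.swap a b * Equiv.swap b c) c = a ∧
    (∀ p, p ≠ a → p ≠ b → p ≠ c → (Equiv.swap a b * Equiv.swap b c) p = p) := by
  refine ⟨?_, ?_, ?_, ?_⟩
  · simp [Equiv.Perm.mul_apply, Equiv.swap_apply_of_ne_of_ne hab hac]
  · simp [Equiv.Perm.mul_apply, Equiv.swap_apply_of_ne_of_ne (Ne.symm hac) (Ne.symm hbc)]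
  · simp [Equiv.Perm.mul_apply]
  · intro p hpa hpb hpc
    simp [Equiv.Perm.mul_apply, Equiv.swap_apply_of_ne_of_ne hpb hpc,
      Equiv.swap_apply_of_ne_of_ne hpa hpb]

lemma cyc_mem {a b c : Fin N} (hab : a ≠ b) (hbc : b ≠ c) :
    (Equiv.swap a b * Equiv.swap b c) ∈ alternatingGroup (Fin N) := by
  rw [Equiv.Perm.mem_alternatingGroup, map_mul, Equiv.Perm.sign_swap hab,
    Equiv.Perm.sign_swap hbc]
  decide

variable {C : Submodule (ZMod 2) (Fin N → ZMod 2)}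

lemma pair_neighbor (hC : ∀ σ ∈ alternatingGroup (Fin N), ∀ v ∈ C, (fun i => v (σ i)) ∈ C)
    {a b : Fin N} (hab : a ≠ b) (h : pairVec a b ∈ C) {c : Fin N} (hca : c ≠ a) (hcb : c ≠ b) :
    pairVec a c ∈ C ∧ pairVec b c ∈ C := by
  set σ := Equiv.swap a b * Equiv.swap b c with hσdef
  obtain ⟨h1, h2, h3, _⟩ := cyc_apply hab (Ne.symm hcb) (Ne.symm hca)
  have hσ : σ ∈ alternatingGroup (Fin N) := cyc_mem hab (Ne.symm hcb)
  have e1 : (fun p => pairVec a b (σ p)) ∈ C := hC σ hσ _ h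
  rw [pairVec_comp] at e1
  have sa : σ.symm a = c := by rw [Equiv.symm_apply_eq]; exact h3.symm
  have sb : σ.symm b = a := by rw [Equiv.symm_apply_eq]; exact h1.symm
  rw [sa, sb] at e1
  have hσ' : σ⁻¹ ∈ alternatingGroup (Fin N) := inv_mem hσ
  have e2 : (fun p => pairVec a b (σ⁻¹ p)) ∈ C := hC _ hσ' _ h
  rw [pairVec_comp] at e2
  have hsymm : (σ⁻¹ : Equiv.Perm (Fin N)).symm = σ := rfl
  rw [hsymm, h1, h2] at e2
  exact ⟨pairVec_symm c a ▸ e1, e2⟩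

lemma all_pairs (hC : ∀ σ ∈ alternatingGroup (Fin N), ∀ v ∈ C, (fun i => v (σ i)) ∈ C)
    (h : ∃ a b : Fin N, a ≠ b ∧ pairVec a b ∈ C) :
    ∀ i j : Fin N, i ≠ j → pairVec i j ∈ C := by
  obtain ⟨a, b, hab, hmem⟩ := h
  intro i j hij
  by_cases hia : i = a
  · by_cases hjb : j = b
    · rw [hia, hjb]; exact hmem
    · have hja : j ≠ a := fun h => hij (hia.trans h.symm)
      rw [hia]
      exact (pair_neighbor hC hab hmem hja hjb).1
  · by_cases hib : i = b
    · by_cases hja : j = a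
      · rw [hib, hja, pairVec_symm]; exact hmem
      · have hjb : j ≠ b := fun h => hij (hib.trans h.symm)
        rw [hib]
        exact (pair_neighbor hC hab hmem hja hjb).2
    · have hi := pair_neighbor hC hab hmem hia hib
      by_cases hja : j = a
      · rw [hja, pairVec_symm]; exact hi.1
      · by_cases hjb : j = b
        · rw [hjb, pairVec_symm]; exact hi.2
        · have hj := pair_neighbor hC hab hmem hja hjb
          rw [← pairVec_add (Ne.symm hia) (Ne.symm hja) hij]
          exact C.add_mem hi.1 hj.1

lemma even_sub (hpair : ∀ i j : Fin N, i ≠ j → pairVec i j ∈ C) :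
    ∀ v : Fin N → ZMod 2, Even (hwt v) → v ∈ C := by
  suffices H : ∀ n, ∀ v : Fin N → ZMod 2, hwt v = n → Even n → v ∈ C from
    fun v hv => H _ v rfl hv
  intro n
  induction n using Nat.strong_induction_on with
  | _ n ih =>
    intro v hvn hn
    rcases Nat.eq_zero_or_pos n with h0 | hpos
    · subst h0
      have hv0 : v = 0 := by
        funext p
        simp only [Pi.zero_apply]
        by_contra hp
        have hmem : p ∈ Finset.univ.filter fun i => v i ≠ 0 := by
          simp [hp]
        rw [hwt, Finset.card_eq_zero] at hvn
        rw [hvn] at hmem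
        exact absurd hmem (Finset.notMem_empty p)
      exact hv0 ▸ C.zero_mem
    · have h2 : 2 ≤ n := by rcases hn with ⟨k, hk⟩; omega
      have hcard : 1 < (Finset.univ.filter fun i => v i ≠ 0).card := by
        rw [hwt] at hvn; omega
      obtain ⟨i, hi, j, hj, hij⟩ := Finset.one_lt_card.mp hcard
      simp only [Finset.mem_filter, Finset.mem_univ, true_and] at hi hj
      have hvi : v i = 1 := (zmod2_cases (v i)).resolve_left hi
      have hvj : v j = 1 := (zmod2_cases (v j)).resolve_left hj
      set w := v + pairVec i j with hw
      have hfil : (Finset.univ.filter fun p => w p ≠ 0) =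
          (Finset.univ.filter fun p => v p ≠ 0) \ {i, j} := by
        ext p
        simp only [Finset.mem_filter, Finset.mem_sdiff, Finset.mem_insert,
          Finset.mem_singleton, Finset.mem_univ, true_and]
        have h11 : (1 : ZMod 2) + 1 = 0 := by decide
        by_cases hpi : p = i
        · subst hpi
          simp [hw, pairVec, hvi, h11]
        · by_cases hpj : p = j
          · subst hpj
            simp [hw, pairVec, hvj, hpi, h11]
          · simp [hw, pairVec, hpi, hpj]
      have hsub : ({i, j} : Finset (Fin N)) ⊆ Finset.univ.filter fun p => v p ≠ 0 := by
        intro p hp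
        simp only [Finset.mem_insert, Finset.mem_singleton] at hp
        rcases hp with rfl | rfl <;> simp [hvi, hvj]
      have hcard2 : hwt w = n - 2 := by
        rw [hwt, hfil, Finset.card_sdiff_of_subset hsub, Finset.card_pair hij]
        rw [hwt] at hvn; rw [hvn]
      have heven : Even (n - 2) := by rcases hn with ⟨k, hk⟩; exact ⟨k - 1, by omega⟩
      have hwC : w ∈ C := ih _ (by omega) w hcard2 heven
      have hself : pairVec i j + pairVec i j = 0 := by
        funext p
        rcases zmod2_cases (pairVec i j p) with h | h <;>
          simp only [Pi.add_apply, Pi.zero_apply, h] <;> decide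
      have hv : v = w + pairVec i j := by
        rw [hw, add_assoc, hself, add_zero]
      rw [hv]
      exact C.add_mem hwC (hpair i j hij)

lemma exists_pair (hN : 3 ≤ N)
    (hC : ∀ σ ∈ alternatingGroup (Fin N), ∀ v ∈ C, (fun i => v (σ i)) ∈ C)
    {v : Fin N → ZMod 2} (hv : v ∈ C) (hv0 : v ≠ 0) (hv1 : v ≠ fun _ => 1) :
    ∃ a b : Fin N, a ≠ b ∧ pairVec a b ∈ C := by
  obtain ⟨i, hvi⟩ : ∃ i, v i = 1 := by
    by_contra h
    push_neg at h
    apply hv0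
    funext p
    exact (zmod2_cases (v p)).resolve_right (h p)
  obtain ⟨j, hvj⟩ : ∃ j, v j = 0 := by
    by_contra h
    push_neg at h
    apply hv1
    funext p
    exact (zmod2_cases (v p)).resolve_left (h p)
  have hij : i ≠ j := fun h => by rw [h, hvj] at hvi; exact absurd hvi (by decide)
  obtain ⟨k, hki, hkj⟩ : ∃ k, k ≠ i ∧ k ≠ j := by
    by_contra h
    push_neg at h
    have hsub : (Finset.univ : Finset (Fin N)) ⊆ {i, j} := by
      intro p _
      rcases Decidable.em (p = i) with hp | hp
      · simp [hp]
      · simp [h p hp]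
    have := Finset.card_le_card hsub
    have h2 : ({i, j} : Finset (Fin N)).card ≤ 2 := Finset.card_insert_le _ _ |>.trans (by simp)
    simp only [Finset.card_univ, Fintype.card_fin] at this
    omega
  set σ := Equiv.swap i j * Equiv.swap j k with hσdef
  obtain ⟨h1, h2, h3, h4⟩ := cyc_apply hij (Ne.symm hkj) (Ne.symm hki)
  have hσ : σ ∈ alternatingGroup (Fin N) := cyc_mem hij (Ne.symm hkj)
  have hwC : v + (fun p => v (σ p)) ∈ C := C.add_mem hv (hC σ hσ v hv)
  have h11 : (1 : ZMod 2) + 1 = 0 := by decide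
  rcases zmod2_cases (v k) with hk0 | hk1
  · refine ⟨i, k, Ne.symm hki, ?_⟩
    have heq : v + (fun p => v (σ p)) = pairVec i k := by
      funext p
      by_cases hpi : p = i
      · subst hpi; simp only [Pi.add_apply, hσdef, h1]; simp [pairVec, h1, hvi, hvj, h11]
      · by_cases hpj : p = j
        · subst hpj; simp only [Pi.add_apply, hσdef, h2]; simp [pairVec, h2, hvj, hk0, hpi, Ne.symm hkj, h11]
        · by_cases hpk : p = k
          · subst hpk; simp [pairVec, hσdef, h3, hvi, hk0, hpi, h11]
          · simp only [Pi.add_apply, hσdef, h4 p hpi hpj hpk, pairVec, hpi, hpk, or_self,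
              if_false]
            rcases zmod2_cases (v p) with h | h <;> rw [h] <;> decide
    exact heq ▸ hwC
  · refine ⟨i, j, hij, ?_⟩
    have heq : v + (fun p => v (σ p)) = pairVec i j := by
      funext p
      by_cases hpi : p = i
      · subst hpi; simp only [Pi.add_apply, hσdef, h1]; simp [pairVec, h1, hvi, hvj, h11]
      · by_cases hpj : p = j
        · subst hpj; simp only [Pi.add_apply, hσdef, h2]; simp [pairVec, h2, hvj, hk1, hpi, h11]
        · by_cases hpk : p = k
          · subst hpk; simp [pairVec, hσdef, h3, hvi, hk1, hki, hkj, h11]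
          · simp only [Pi.add_apply, hσdef, h4 p hpi hpj hpk, pairVec, hpi, hpj, or_self,
              if_false]
            rcases zmod2_cases (v p) with h | h <;> rw [h] <;> decide
    exact heq ▸ hwC

lemma key (hN : 3 ≤ N) (C : Submodule (ZMod 2) (Fin N → ZMod 2))
    (hC : ∀ σ ∈ alternatingGroup (Fin N), ∀ v ∈ C, (fun i => v (σ i)) ∈ C) :
    ((C : Set (Fin N → ZMod 2)) = {0} ∨
     (C : Set (Fin N → ZMod 2)) = {0, fun _ => 1} ∨
     (C : Set (Fin N → ZMod 2)) = {v | Even (hwt v)} ∨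
     (C : Set (Fin N → ZMod 2)) = Set.univ) := by
  by_cases hsmall : ∀ v ∈ C, v = 0 ∨ v = fun _ => 1
  · by_cases hone : (fun _ => (1 : ZMod 2)) ∈ C
    · right; left
      ext u
      simp only [SetLike.mem_coe, Set.mem_insert_iff, Set.mem_singleton_iff]
      constructor
      · exact fun hu => hsmall u hu
      · rintro (rfl | rfl)
        · exact C.zero_mem
        · exact hone
    · left
      ext u
      simp only [SetLike.mem_coe, Set.mem_singleton_iff]
      constructor
      · intro hu
        rcases hsmall u hu with rfl | rfl
        · rfl
        · exact absurd hu hone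
      · rintro rfl; exact C.zero_mem
  · push_neg at hsmall
    obtain ⟨v, hv, hv0, hv1⟩ := hsmall
    have hpairs := all_pairs hC (exists_pair hN hC hv hv0 hv1)
    have heven := even_sub hpairs
    by_cases hall : ∀ w ∈ C, Even (hwt w)
    · right; right; left
      ext u
      simp only [SetLike.mem_coe, Set.mem_setOf_eq]
      exact ⟨hall u, heven u⟩
    · right; right; right
      push_neg at hall
      obtain ⟨w, hw, hwodd⟩ := hall
      ext u
      simp only [SetLike.mem_coe, Set.mem_univ, iff_true]
      by_cases hu : Even (hwt u)
      · exact heven u hu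
      · have h1 : ∑ i, w i = 1 :=
          (zmod2_cases _).resolve_left (fun h => hwodd ((even_hwt_iff w).mpr h))
        have h2 : ∑ i, u i = 1 :=
          (zmod2_cases _).resolve_left (fun h => hu ((even_hwt_iff u).mpr h))
        have hsum : Even (hwt (u + w)) := by
          rw [even_hwt_iff]
          have : ∑ i, (u + w) i = ∑ i, u i + ∑ i, w i := by
            rw [← Finset.sum_add_distrib]; rfl
          rw [this, h1, h2]; decide
        have huw := heven _ hsum
        have hself : w + w = 0 := by
          funext p
          rcases zmod2_cases (w p) with h | h <;>
            simp only [Pi.add_apply, Pi.zero_apply, h] <;> decide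
        have : u = (u + w) + w := by rw [add_assoc, hself, add_zero]
        rw [this]
        exact C.add_mem huw hw

lemma comp_eq_zero_iff (v : Fin N → ZMod 2) (σ : Equiv.Perm (Fin N)) :
    (fun i => v (σ i)) = 0 ↔ v = 0 := by
  constructor
  · intro h
    funext p
    have := congrFun h (σ.symm p)
    simpa using this
  · rintro rfl; rfl

lemma comp_eq_ones_iff (v : Fin N → ZMod 2) (σ : Equiv.Perm (Fin N)) :
    (fun i => v (σ i)) = (fun _ => 1) ↔ v = fun _ => 1 := by
  constructor
  · intro h
    funext p
    have := congrFun h (σ.symm p)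
    simpa using this
  · rintro rfl; rfl

end AltCode

open AltCode in
theorem alt_invariant_codes (N : ℕ) (hN : 3 ≤ N) :
    (∀ C : Submodule (ZMod 2) (Fin N → ZMod 2),
      (∀ σ ∈ alternatingGroup (Fin N), ∀ v ∈ C, (fun i => v (σ i)) ∈ C) →
      ((C : Set (Fin N → ZMod 2)) = {0} ∨
       (C : Set (Fin N → ZMod 2)) = {0, fun _ => 1} ∨
       (C : Set (Fin N → ZMod 2)) = {v | Even (hwt v)} ∨
       (C : Set (Fin N → ZMod 2)) = Set.univ)) ∧
    (∀ C : Submodule (ZMod 2) (Fin N → ZMod 2),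
      {σ : Equiv.Perm (Fin N) | ∀ v : Fin N → ZMod 2,
          (fun i => v (σ i)) ∈ C ↔ v ∈ C} ≠
        (alternatingGroup (Fin N) : Set (Equiv.Perm (Fin N)))) := by
  constructor
  · exact fun C hC => key hN C hC
  · intro C hset
    have hC : ∀ σ ∈ alternatingGroup (Fin N), ∀ v ∈ C, (fun i => v (σ i)) ∈ C := by
      intro σ hσ v hv
      have hmem : σ ∈ {σ : Equiv.Perm (Fin N) | ∀ v : Fin N → ZMod 2,
          (fun i => v (σ i)) ∈ C ↔ v ∈ C} := by
        rw [hset]; exact hσ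
      exact (hmem v).mpr hv
    have h4 := key hN C hC
    have hnt : Nontrivial (Fin N) := Fintype.one_lt_card_iff_nontrivial.mp (by simp; omega)
    obtain ⟨a, b, hab⟩ := exists_pair_ne (Fin N)
    have hτnot : Equiv.swap a b ∉ alternatingGroup (Fin N) := by
      rw [Equiv.Perm.mem_alternatingGroup, Equiv.Perm.sign_swap hab]; decide
    have hτin : Equiv.swap a b ∈ {σ : Equiv.Perm (Fin N) | ∀ v : Fin N → ZMod 2,
        (fun i => v (σ i)) ∈ C ↔ v ∈ C} := by
      intro v
      have mem_iff : ∀ u : Fin N → ZMod 2, u ∈ C ↔ u ∈ (C : Set (Fin N → ZMod 2)) :=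
        fun _ => Iff.rfl
      rcases h4 with h | h | h | h
      · rw [mem_iff, mem_iff, h, Set.mem_singleton_iff, Set.mem_singleton_iff]
        exact comp_eq_zero_iff v _
      · rw [mem_iff, mem_iff, h, Set.mem_insert_iff, Set.mem_insert_iff,
          Set.mem_singleton_iff, Set.mem_singleton_iff]
        exact or_congr (comp_eq_zero_iff v _) (comp_eq_ones_iff v _)
      · rw [mem_iff, mem_iff, h, Set.mem_setOf_eq, Set.mem_setOf_eq, hwt_comp]
      · rw [mem_iff, mem_iff, h]; simp
    rw [hset] at hτin
    exact hτnot hτin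
end
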